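/- Fix a nonnull type θ₁ ∈ Θ₁ and a menu F, and for π₀ ∈ [0,1] let Q_{π₀} = π₀·δ_{θ₀} + (1−π₀)·δ_{θ₁} be the two-point mixture over types. Then the following are equivalent: (i) for every θ₀ ∈ Θ₀ and every best-response selection, liminf_{π₀→1} U(F, Q_{π₀}) ≥ 0; (ii) F is incentive-aligned. Moreover, if F is not incentive-aligned, then for some θ₀ ∈ Θ₀ and every best-response selection, lim_{π₀→1} U(F, Q_{π₀}) = E_{Z∼P_{θ₀}}[u(θ₀, f^br(Z;θ₀,F))] < 0. -/

import Mathlib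

open MeasureTheory Filter

variable {Z Θ : Type*} [MeasurableSpace Z]

/-- An agent of type `θ` opts in iff some license in the menu has expected
value exceeding the trial cost `C` (i.e. the supremum over the menu exceeds `C`). -/
def OptsIn (P : Θ → Measure Z) (C : ℝ) (F : Set (Z → ℝ)) (θ : Θ) : Prop :=
  ∃ f ∈ F, C < ∫ z, f z ∂(P θ)

/-- A best-response selection assigns to each opting-in type a license in the
menu maximizing its expected value. -/
def IsBRSelection (P : Θ → Measure Z) (C : ℝ) (F : Set (Z → ℝ))
    (fbr : Θ → Z → ℝ) : Prop :=
  ∀ θ : Θ, OptsIn P C F θ →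
    fbr θ ∈ F ∧ ∀ g ∈ F, ∫ z, g z ∂(P θ) ≤ ∫ z, fbr θ z ∂(P θ)

open Classical in
/-- The utility contributed by an agent of type `θ`: zero if the agent opts out,
and the expected utility of the best-response license otherwise. -/
noncomputable def contrib (P : Θ → Measure Z) (C : ℝ) (F : Set (Z → ℝ))
    (u : Θ → ℝ → ℝ) (fbr : Θ → Z → ℝ) (θ : Θ) : ℝ :=
  if OptsIn P C F θ then ∫ z, u θ (fbr θ z) ∂(P θ) else 0

/-- For the two-point mixture `Q_{π₀} = π₀·δ_{θ₀} + (1-π₀)·δ_{θ₁}`,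
nonnegativity of `liminf_{π₀→1} U(F, Q_{π₀})` for every null type and every
best-response selection is equivalent to incentive alignment; moreover, if `F` is not
incentive-aligned then for some null `θ₀` the utility converges, as `π₀ → 1`, to
`E_{P_{θ₀}}[u(θ₀, f^br(Z; θ₀, F))] < 0`. -/
theorem stmt_2
    (P : Θ → Measure Z) [∀ θ, IsProbabilityMeasure (P θ)]
    (Θ₀ : Set Θ) (C : ℝ) (hC : 0 < C)
    (F : Set (Z → ℝ))
    (hmeas : ∀ f ∈ F, Measurable f)
    (hnonneg : ∀ f ∈ F, ∀ z, 0 ≤ f z)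
    (hint : ∀ f ∈ F, ∀ θ : Θ, Integrable f (P θ))
    (u : Θ → ℝ → ℝ) (a₁ : ℝ)
    (hu1 : ∀ θ₁ ∉ Θ₀, ∀ L : ℝ, 0 ≤ L → 0 ≤ u θ₁ L ∧ u θ₁ L ≤ a₁)
    (hu1mono : ∀ θ₁ ∉ Θ₀, MonotoneOn (u θ₁) (Set.Ici 0))
    (hu0neg : ∀ θ₀ ∈ Θ₀, ∀ L : ℝ, 0 < L → u θ₀ L < 0)
    (hu00 : ∀ θ₀ ∈ Θ₀, u θ₀ 0 ≤ 0)
    (hu0anti : ∀ θ₀ ∈ Θ₀, AntitoneOn (u θ₀) (Set.Ici 0))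
    (huint : ∀ θ : Θ, ∀ f ∈ F, Integrable (fun z => u θ (f z)) (P θ))
    (hbrex : ∃ fbr, IsBRSelection P C F fbr)
    (θ₁ : Θ) (hθ₁ : θ₁ ∉ Θ₀) :
    ((∀ θ₀ ∈ Θ₀, ∀ fbr, IsBRSelection P C F fbr →
        0 ≤ liminf (fun π₀ : ℝ =>
            π₀ * contrib P C F u fbr θ₀ + (1 - π₀) * contrib P C F u fbr θ₁)
          (nhdsWithin 1 (Set.Ico (0 : ℝ) 1))) ↔
      (∀ θ₀ ∈ Θ₀, ∀ f ∈ F, ∫ z, f z ∂(P θ₀) ≤ C)) ∧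
    (¬ (∀ θ₀ ∈ Θ₀, ∀ f ∈ F, ∫ z, f z ∂(P θ₀) ≤ C) →
      ∃ θ₀ ∈ Θ₀, ∀ fbr, IsBRSelection P C F fbr →
        Tendsto (fun π₀ : ℝ =>
            π₀ * contrib P C F u fbr θ₀ + (1 - π₀) * contrib P C F u fbr θ₁)
          (nhdsWithin 1 (Set.Ico (0 : ℝ) 1))
          (nhds (∫ z, u θ₀ (fbr θ₀ z) ∂(P θ₀))) ∧
        ∫ z, u θ₀ (fbr θ₀ z) ∂(P θ₀) < 0) := by

  classical
  haveI hNB : (nhdsWithin (1:ℝ) (Set.Ico (0:ℝ) 1)).NeBot := by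
    refine mem_closure_iff_nhdsWithin_neBot.mp ?_
    rw [closure_Ico (by norm_num : (0:ℝ) ≠ 1)]
    exact ⟨by norm_num, le_refl 1⟩
  have key : ¬ (∀ θ₀ ∈ Θ₀, ∀ f ∈ F, ∫ z, f z ∂(P θ₀) ≤ C) →
      ∃ θ₀ ∈ Θ₀, ∀ fbr, IsBRSelection P C F fbr →
        Tendsto (fun π₀ : ℝ =>
            π₀ * contrib P C F u fbr θ₀ + (1 - π₀) * contrib P C F u fbr θ₁)
          (nhdsWithin 1 (Set.Ico (0 : ℝ) 1))
          (nhds (∫ z, u θ₀ (fbr θ₀ z) ∂(P θ₀))) ∧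
        ∫ z, u θ₀ (fbr θ₀ z) ∂(P θ₀) < 0 := by
    intro hna
    push_neg at hna
    obtain ⟨θ₀, hθ₀, f, hf, hfC⟩ := hna
    refine ⟨θ₀, hθ₀, fun fbr hbr => ?_⟩
    have hopt : OptsIn P C F θ₀ := ⟨f, hf, hfC⟩
    obtain ⟨hmem, hmax⟩ := hbr θ₀ hopt
    set g := fbr θ₀ with hg
    have hgint : Integrable g (P θ₀) := hint _ hmem θ₀
    have hgnn : ∀ z, 0 ≤ g z := hnonneg _ hmem
    have hgmeas : Measurable g := hmeas _ hmem
    have hgC : C < ∫ z, g z ∂(P θ₀) := lt_of_lt_of_le hfC (hmax f hf)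
    have hune : ∀ L : ℝ, 0 ≤ L → u θ₀ L ≤ 0 := by
      intro L hL
      rcases eq_or_lt_of_le hL with h | h
      · rw [← h]; exact hu00 θ₀ hθ₀
      · exact le_of_lt (hu0neg θ₀ hθ₀ L h)
    have hneg : ∫ z, u θ₀ (g z) ∂(P θ₀) < 0 := by
      have hpos : 0 < ∫ z, g z ∂(P θ₀) := lt_trans hC hgC
      have hsupp : 0 < (P θ₀) (Function.support g) :=
        (integral_pos_iff_support_of_nonneg hgnn hgint).mp hpos
      have hsub : Function.support g ⊆ ⋃ n : ℕ, {z | (1:ℝ)/(n+1) ≤ g z} := by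
        intro z hz
        have hz' : 0 < g z := lt_of_le_of_ne (hgnn z) (Ne.symm hz)
        obtain ⟨n, hn⟩ := exists_nat_one_div_lt hz'
        exact Set.mem_iUnion.mpr ⟨n, le_of_lt hn⟩
      have : ∃ n : ℕ, 0 < (P θ₀) {z | (1:ℝ)/(n+1) ≤ g z} := by
        by_contra hcon
        push_neg at hcon
        have : (P θ₀) (⋃ n : ℕ, {z | (1:ℝ)/(n+1) ≤ g z}) = 0 :=
          measure_iUnion_null fun n => le_antisymm (hcon n) zero_le
        exact absurd (measure_mono_null hsub this) (ne_of_gt hsupp)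
      obtain ⟨n, hn⟩ := this
      set c : ℝ := 1 / (n + 1) with hc
      have hcpos : 0 < c := by positivity
      set B : Set Z := {z | c ≤ g z} with hB
      have hBmeas : MeasurableSet B := measurableSet_le measurable_const hgmeas
      have hupt : ∀ z, u θ₀ (g z) ≤ B.indicator (fun _ => u θ₀ c) z := by
        intro z
        by_cases hz : z ∈ B
        · rw [Set.indicator_of_mem hz]
          exact hu0anti θ₀ hθ₀ (le_of_lt hcpos) (le_trans (le_of_lt hcpos) hz) hz
        · rw [Set.indicator_of_notMem hz]
          exact hune _ (hgnn z)
      have hiint : Integrable (B.indicator (fun _ => u θ₀ c)) (P θ₀) :=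
        (integrable_const _).indicator hBmeas
      have h1 : ∫ z, u θ₀ (g z) ∂(P θ₀) ≤ ∫ z, B.indicator (fun _ => u θ₀ c) z ∂(P θ₀) :=
        integral_mono (huint θ₀ _ hmem) hiint hupt
      have h2 : ∫ z, B.indicator (fun _ => u θ₀ c) z ∂(P θ₀)
          = ((P θ₀) B).toReal • u θ₀ c := integral_indicator_const _ hBmeas
      have h3 : ((P θ₀) B).toReal • u θ₀ c < 0 := by
        have hfin : (P θ₀) B ≠ ⊤ := measure_ne_top _ _
        have : 0 < ((P θ₀) B).toReal := ENNReal.toReal_pos (ne_of_gt hn) hfin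
        exact smul_neg_of_pos_of_neg this (hu0neg θ₀ hθ₀ c hcpos)
      calc ∫ z, u θ₀ (g z) ∂(P θ₀) ≤ _ := h1
        _ = _ := h2
        _ < 0 := h3
    refine ⟨?_, hneg⟩
    have hc0 : contrib P C F u fbr θ₀ = ∫ z, u θ₀ (g z) ∂(P θ₀) := if_pos hopt
    have hT : Tendsto (fun π₀ : ℝ =>
        π₀ * contrib P C F u fbr θ₀ + (1 - π₀) * contrib P C F u fbr θ₁)
        (nhds 1) (nhds (∫ z, u θ₀ (fbr θ₀ z) ∂(P θ₀))) := by
      have hcont : Continuous (fun π₀ : ℝ =>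
          π₀ * contrib P C F u fbr θ₀ + (1 - π₀) * contrib P C F u fbr θ₁) := by
        continuity
      have := hcont.tendsto 1
      simpa [hc0] using this
    exact hT.mono_left nhdsWithin_le_nhds
  constructor
  · constructor
    · intro h
      by_contra hna
      obtain ⟨θ₀, hθ₀, hspec⟩ := key hna
      obtain ⟨fbr, hbr⟩ := hbrex
      obtain ⟨hT, hlt⟩ := hspec fbr hbr
      have hlim := h θ₀ hθ₀ fbr hbr
      rw [hT.liminf_eq] at hlim
      exact absurd hlt (not_lt.mpr hlim)
    · intro hal θ₀ hθ₀ fbr hbr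
      have hno : ¬ OptsIn P C F θ₀ := by
        rintro ⟨f, hf, hfC⟩
        exact absurd (hal θ₀ hθ₀ f hf) (not_le.mpr hfC)
      have hc0 : contrib P C F u fbr θ₀ = 0 := if_neg hno
      have hT : Tendsto (fun π₀ : ℝ =>
          π₀ * contrib P C F u fbr θ₀ + (1 - π₀) * contrib P C F u fbr θ₁)
          (nhdsWithin 1 (Set.Ico (0 : ℝ) 1)) (nhds 0) := by
        have hcont : Continuous (fun π₀ : ℝ =>
            π₀ * contrib P C F u fbr θ₀ + (1 - π₀) * contrib P C F u fbr θ₁) := by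
          continuity
        have := (hcont.tendsto 1).mono_left
          (nhdsWithin_le_nhds (s := Set.Ico (0 : ℝ) 1))
        simpa [hc0] using this
      rw [hT.liminf_eq]
  · exact key
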